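/- Let M, K, N be positive integers with N > 1 and M = αKN for an integer α > 1 (so M ≥ KN). Then [∑_{j=1}^{KN-1} j/(M-j)] - [∑_{k=0}^{K-1} ∑_{n=0}^{N-1} ∑_{i=kN+1}^{(K-1)N} 1/(M-n-i)] = ∑_{i=1}^{N-1} K(N-i)/((α-1)KN + i). -/

import Mathlib

open Finset

lemma shift_Ioc (f : ℕ → ℝ) (c a b : ℕ) :
    ∑ j ∈ Ioc (c + a) (c + b), f j = ∑ j ∈ Ioc a b, f (c + j) := by
  rw [← Finset.map_add_left_Ioc, Finset.sum_map]
  rfl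

lemma tele (f : ℕ → ℝ) {a b : ℕ} (h : a ≤ b) :
    ∑ j ∈ Ioc a b, f j = (∑ j ∈ Ioc 0 b, f j) - ∑ j ∈ Ioc 0 a, f j := by
  rw [← Finset.sum_Ioc_consecutive f (Nat.zero_le a) h]
  ring

lemma L1 (f : ℕ → ℝ) (S : ℕ) :
    ∑ m ∈ range (S + 1), ∑ j ∈ Ioc m S, f j = ∑ j ∈ Ioc 0 S, (j : ℝ) * f j := by
  induction S with
  | zero => simp
  | succ S ih =>
    rw [Finset.sum_range_succ, Finset.sum_congr rfl
      (fun m hm => Finset.sum_Ioc_succ_top (by simp at hm; omega) f),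
      Finset.sum_add_distrib, ih, Finset.sum_const, card_range,
      Finset.sum_Ioc_succ_top (Nat.zero_le _)]
    simp [Ioc_self]

lemma L3 (g : ℕ → ℝ) (K N : ℕ) :
    ∑ k ∈ range K, ∑ n ∈ range N, g (k * N + n) = ∑ m ∈ range (K * N), g m := by
  induction K with
  | zero => simp
  | succ K ih =>
    rw [Finset.sum_range_succ, ih, Nat.succ_mul, Finset.sum_range_add]

/-- For positive integers `K, N` with `N > 1` and `M = αKN` for an integer `α > 1`,
the DPC–ZF offset minus the DPC–BD offset equals `∑_{i=1}^{N-1} K(N-i)/((α-1)KN + i)`. -/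
theorem stmt_7 (M K N α : ℕ) (hK : 0 < K) (hN : 1 < N) (hα : 1 < α)
    (hM : M = α * K * N) :
    (∑ j ∈ Finset.Icc 1 (K * N - 1), (j : ℝ) / ((M : ℝ) - (j : ℝ)))
      - (∑ k ∈ Finset.range K, ∑ n ∈ Finset.range N,
          ∑ i ∈ Finset.Icc (k * N + 1) ((K - 1) * N),
            (1 : ℝ) / ((M : ℝ) - (n : ℝ) - (i : ℝ)))
      = ∑ i ∈ Finset.Icc 1 (N - 1),
          ((K : ℝ) * ((N : ℝ) - (i : ℝ))) / (((α : ℝ) - 1) * K * N + (i : ℝ)) := by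
  set f : ℕ → ℝ := fun j => 1 / ((M : ℝ) - j) with hf
  set F : ℕ → ℝ := fun a => ∑ j ∈ Ioc 0 a, f j with hF
  have hB : (K - 1) * N + N = K * N := by
    cases K with
    | zero => omega
    | succ k => simp [Nat.succ_mul]
  have hT1 : K * N - 1 = (K - 1) * N + (N - 1) := by omega
  -- Step A : S1
  have e1 : (∑ j ∈ Finset.Icc 1 (K * N - 1), (j : ℝ) / ((M : ℝ) - (j : ℝ)))
      = ∑ j ∈ Ioc 0 (K * N - 1), (j : ℝ) * f j := by
    rw [show Finset.Icc 1 (K * N - 1) = Ioc 0 (K * N - 1) from Finset.Icc_add_one_left_eq_Ioc 0 _]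
    exact Finset.sum_congr rfl fun j hj => (mul_one_div _ _).symm
  -- Step B : S2
  have e2 : (∑ k ∈ Finset.range K, ∑ n ∈ Finset.range N,
          ∑ i ∈ Finset.Icc (k * N + 1) ((K - 1) * N),
            (1 : ℝ) / ((M : ℝ) - (n : ℝ) - (i : ℝ)))
      = (K : ℝ) * (∑ n ∈ range N, F (n + (K - 1) * N)) - ∑ m ∈ range (K * N), F m := by
    have inner : ∀ k ∈ range K, ∀ n ∈ range N,
        (∑ i ∈ Finset.Icc (k * N + 1) ((K - 1) * N),
            (1 : ℝ) / ((M : ℝ) - (n : ℝ) - (i : ℝ)))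
        = F (n + (K - 1) * N) - F (n + k * N) := by
      intro k hk n hn
      have h1 : (∑ i ∈ Finset.Icc (k * N + 1) ((K - 1) * N),
            (1 : ℝ) / ((M : ℝ) - (n : ℝ) - (i : ℝ)))
          = ∑ i ∈ Ioc (k * N) ((K - 1) * N), f (n + i) := by
        rw [show Finset.Icc (k * N + 1) ((K - 1) * N) = Ioc (k * N) ((K - 1) * N) from
          Finset.Icc_add_one_left_eq_Ioc _ _]
        refine Finset.sum_congr rfl fun i hi => ?_
        simp only [hf]
        push_cast
        ring_nf
      have hk' : k ≤ K - 1 := by simp only [mem_range] at hk; omega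
      rw [h1, ← shift_Ioc f n (k * N) ((K - 1) * N),
        tele f (Nat.add_le_add_left (Nat.mul_le_mul_right _ hk') n)]
    rw [Finset.sum_congr rfl fun k hk => Finset.sum_congr rfl (inner k hk)]
    have : ∀ k ∈ range K, ∑ n ∈ range N, (F (n + (K - 1) * N) - F (n + k * N))
        = (∑ n ∈ range N, F (n + (K - 1) * N)) - ∑ n ∈ range N, F (n + k * N) :=
      fun k _ => Finset.sum_sub_distrib _ _
    rw [Finset.sum_congr rfl this, Finset.sum_sub_distrib, Finset.sum_const, card_range,
      nsmul_eq_mul]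
    congr 1
    rw [← L3 F K N]
    exact Finset.sum_congr rfl fun k _ => Finset.sum_congr rfl fun n _ => by rw [add_comm]
  -- Step C : RHS reindex
  have e3 : (∑ i ∈ Finset.Icc 1 (N - 1),
          ((K : ℝ) * ((N : ℝ) - (i : ℝ))) / (((α : ℝ) - 1) * K * N + (i : ℝ)))
      = (K : ℝ) * ∑ r ∈ Ioc 0 (N - 1), (r : ℝ) * f ((K - 1) * N + r) := by
    rw [Finset.mul_sum, show (Ioc 0 (N-1) : Finset ℕ) = Finset.Icc 1 (N - 1) from
      (Finset.Icc_add_one_left_eq_Ioc 0 _).symm]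
    refine Finset.sum_nbij' (i := fun i => N - i) (j := fun r => N - r) ?_ ?_ ?_ ?_ ?_
    · intro a ha; simp only [mem_Icc] at *; omega
    · intro a ha; simp only [mem_Icc] at *; omega
    · intro a ha; simp only [mem_Icc] at ha; show N - (N - a) = a; omega
    · intro a ha; simp only [mem_Icc] at ha; show N - (N - a) = a; omega
    · intro a ha
      simp only [mem_Icc] at ha
      have h1 : ((N - a : ℕ) : ℝ) = (N : ℝ) - a := by
        have : a ≤ N := by omega
        push_cast [this]; ring
      have h2 : (((K - 1) * N + (N - a) : ℕ) : ℝ) = (K : ℝ) * N - a := by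
        have h3 : (K - 1) * N + (N - a) = K * N - a := by omega
        rw [h3]
        have : a ≤ K * N := by omega
        push_cast [this]; ring
      simp only [hf, h1, h2, hM]
      have hd : ((α * K * N : ℕ) : ℝ) - ((K : ℝ) * N - a) = ((α : ℝ) - 1) * K * N + a := by
        push_cast; ring
      rw [hd]; ring
  -- Step D : counting identity for S1
  have e4 : ((K * N : ℕ) : ℝ) * F (K * N - 1) - ∑ m ∈ range (K * N), F m
      = ∑ j ∈ Ioc 0 (K * N - 1), (j : ℝ) * f j := by
    have h := L1 f (K * N - 1)
    have hS : K * N - 1 + 1 = K * N := by omega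
    rw [hS, Finset.sum_congr rfl
      (fun m hm => tele f (show m ≤ K * N - 1 by simp only [mem_range] at hm; omega)),
      Finset.sum_sub_distrib, Finset.sum_const, card_range, nsmul_eq_mul] at h
    exact h
  -- Step E : the reindexed RHS as telescoping sums
  have e5 : (∑ r ∈ Ioc 0 (N - 1), (r : ℝ) * f ((K - 1) * N + r))
      = ∑ n ∈ range N, (F (K * N - 1) - F (n + (K - 1) * N)) := by
    have h := L1 (fun r => f ((K - 1) * N + r)) (N - 1)
    have hN' : N - 1 + 1 = N := by omega
    rw [hN'] at h
    rw [← h]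
    refine Finset.sum_congr rfl fun n hn => ?_
    have hn' : n ≤ N - 1 := by simp only [mem_range] at hn; omega
    rw [← shift_Ioc f ((K - 1) * N) n (N - 1),
      tele f (Nat.add_le_add_left hn' _), ← hT1, add_comm n ((K - 1) * N)]
  rw [e1, e2, e3, e5, Finset.sum_sub_distrib, Finset.sum_const, card_range, nsmul_eq_mul,
    ← e4]
  push_cast
  ring
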